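/- Monotonicity of d-vectors along mutation in the Markov quiver: with the setup of the Markov quiver (all exchange entries of absolute value 2 in an oriented 3-cycle) and d-vector updates d_{i_k} ↦ −d_{i_k} + max(Σ_j [b_{j,i_k}]_+ d_j, Σ_j [−b_{j,i_k}]_+ d_j) along a reduced sequence i₁, …, i_n starting from d_i = −e_i, the updated vector never decreases: for each step k ≥ 2, the new vector d_{i_k} after step k is componentwise ≥ its value before step k. -/

import Mathlib

/-- Matrix mutation of an integer matrix in direction `k`. -/
def mutate {n : ℕ} (B : Matrix (Fin n) (Fin n) ℤ) (k : Fin n) : Matrix (Fin n) (Fin n) ℤ :=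
  Matrix.of fun i j =>
    if i = k ∨ j = k then -B i j
    else B i j + B i k * max (B k j) 0 + max (-B i k) 0 * B k j

/-- The exchange matrix of the Markov quiver: oriented 3-cycle with all
double arrows. -/
def markovB : Matrix (Fin 3) (Fin 3) ℤ := !![0, -2, 2; 2, 0, -2; -2, 2, 0]

/-- Initial d-vectors: `d_i = -e_i`. -/
def d0 : Fin 3 → Fin 3 → ℤ := fun i j => if j = i then -1 else 0

/-- One d-vector update at direction `k`. -/
def dStep (B : Matrix (Fin 3) (Fin 3) ℤ) (d : Fin 3 → Fin 3 → ℤ) (k : Fin 3) :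
    Fin 3 → Fin 3 → ℤ :=
  Function.update d k fun c =>
    -(d k c) + max (∑ i, max (B i k) 0 * d i c) (∑ i, max (-B i k) 0 * d i c)

/-- One mutation step on the pair (exchange matrix, d-vectors). -/
def step (p : Matrix (Fin 3) (Fin 3) ℤ × (Fin 3 → Fin 3 → ℤ)) (k : Fin 3) :
    Matrix (Fin 3) (Fin 3) ℤ × (Fin 3 → Fin 3 → ℤ) :=
  (mutate p.1 k, dStep p.1 p.2 k)

/-- Running a mutation sequence from the initial Markov seed. -/
def run (l : List (Fin 3)) : Matrix (Fin 3) (Fin 3) ℤ × (Fin 3 → Fin 3 → ℤ) :=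
  l.foldl step (markovB, d0)

def dStep' (d : Fin 3 → Fin 3 → ℤ) (k : Fin 3) : Fin 3 → Fin 3 → ℤ :=
  Function.update d k fun c => -(d k c) + 2 * max (d (k+1) c) (d (k+2) c)

lemma dStep_eq (B : Matrix (Fin 3) (Fin 3) ℤ) (hB : B = markovB ∨ B = -markovB)
    (d : Fin 3 → Fin 3 → ℤ) (k : Fin 3) : dStep B d k = dStep' d k := by
  funext a c
  rcases eq_or_ne a k with rfl | ha
  · simp only [dStep, dStep', Function.update_self]
    rcases hB with h | h <;> subst h <;> fin_cases a <;>
      · simp [markovB, Fin.sum_univ_three, Matrix.neg_apply]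
        omega
  · simp [dStep, dStep', Function.update_of_ne ha]

lemma mutate_markov (k : Fin 3) : mutate markovB k = -markovB := by fin_cases k <;> decide
lemma mutate_neg_markov (k : Fin 3) : mutate (-markovB) k = markovB := by fin_cases k <;> decide

lemma run_fst (l : List (Fin 3)) : (run l).1 = markovB ∨ (run l).1 = -markovB := by
  induction l using List.reverseRecOn with
  | nil => left; rfl
  | append_singleton l k ih =>
    have h : run (l ++ [k]) = step (run l) k := by simp [run, List.foldl_append]
    rw [h]
    rcases ih with h1 | h1
    · right; simp [step, h1, mutate_markov]
    · left; simp [step, h1, mutate_neg_markov]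

lemma run_snd (l : List (Fin 3)) (j : Fin 3) :
    (run (l ++ [j])).2 = dStep' (run l).2 j := by
  have hrun : run (l ++ [j]) = step (run l) j := by simp [run, List.foldl_append]
  rw [hrun]
  exact dStep_eq _ (run_fst l) _ _

lemma run_last_max (l : List (Fin 3)) (hl : l ≠ []) (hred : l.Chain' (· ≠ ·)) :
    ∀ k c, (run l).2 k c ≤ (run l).2 (l.getLast hl) c := by
  induction l using List.reverseRecOn with
  | nil => exact absurd rfl hl
  | append_singleton l j ih =>
    have hlast : (l ++ [j]).getLast hl = j := List.getLast_concat
    rw [hlast, run_snd]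
    rcases eq_or_ne l [] with rfl | hl'
    · intro k c
      show dStep' d0 j k c ≤ dStep' d0 j j c
      revert c; revert k; fin_cases j <;> decide
    · have hch := List.isChain_append.mp hred
      have hchl : l.Chain' (· ≠ ·) := hch.1
      have hj : l.getLast hl' ≠ j := by
        exact hch.2.2 _ (by simp [List.getLast?_eq_getLast hl']) j rfl
      have ihl := ih hl' hchl
      set d := (run l).2 with hd
      set jl := l.getLast hl' with hjl
      have hcase : jl = j + 1 ∨ jl = j + 2 := by
        clear_value jl
        revert hj; fin_cases jl <;> fin_cases j <;> decide
      intro k c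
      have e : dStep' d j j c = -(d j c) + 2 * max (d (j+1) c) (d (j+2) c) := by
        simp [dStep', Function.update_self]
      have hmax : d jl c ≤ max (d (j+1) c) (d (j+2) c) := by
        rcases hcase with h | h <;> rw [h]
        · exact le_max_left _ _
        · exact le_max_right _ _
      have h1 := ihl k c
      have h2 := ihl j c
      rcases eq_or_ne k j with rfl | hk
      · exact le_refl _
      · have ek : dStep' d j k c = d k c := by
          simp [dStep', Function.update_of_ne hk]
        rw [ek, e]
        omega


/-- Monotonicity of d-vectors along mutation in the Markov quiver: for each
step `m + 1 ≥ 2` of a reduced sequence, the updated d-vector at the mutated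
index is componentwise at least its value before the step. -/
theorem markov_dvector_monotone (l : List (Fin 3)) (hred : l.Chain' (· ≠ ·))
    (m : ℕ) (hm : m < l.length) (hm1 : 1 ≤ m) (c : Fin 3) :
    (run (l.take m)).2 (l.get ⟨m, hm⟩) c ≤
      dStep (run (l.take m)).1 (run (l.take m)).2 (l.get ⟨m, hm⟩) (l.get ⟨m, hm⟩) c := by
  set L := l.take m with hL
  have hLlen : L.length = m := by simp [hL]; omega
  have hLne : L ≠ [] := by
    intro h; rw [h] at hLlen; simp at hLlen; omega
  have hLch : L.Chain' (· ≠ ·) := hred.prefix (List.take_prefix m l)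
  set k := l.get ⟨m, hm⟩ with hk
  rw [dStep_eq _ (run_fst L)]
  set d := (run L).2 with hd
  have e : dStep' d k k c = -(d k c) + 2 * max (d (k+1) c) (d (k+2) c) := by
    simp [dStep', Function.update_self]
  set jl := L.getLast hLne with hjl
  have ihl := run_last_max L hLne hLch
  have hjlk : jl ≠ k := by
    have h0 : l.get ⟨m - 1, by omega⟩ = L.get ⟨m - 1, by rw [hLlen]; omega⟩ :=
      by simp [hL]
    have h1 : jl = l.get ⟨m - 1, by omega⟩ := by
      rw [h0, hjl, List.getLast_eq_getElem]
      simp [hLlen]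
    have h2 := List.isChain_iff_getElem.mp hred (m - 1) (by omega)
    rw [h1, hk]
    simpa [show m - 1 + 1 = m by omega] using h2
  have hcase : jl = k + 1 ∨ jl = k + 2 := by
    clear_value jl k
    revert hjlk; fin_cases jl <;> fin_cases k <;> decide
  have hmax : d jl c ≤ max (d (k+1) c) (d (k+2) c) := by
    rcases hcase with h | h <;> rw [h]
    · exact le_max_left _ _
    · exact le_max_right _ _
  have h1 : d k c ≤ d jl c := ihl k c
  rw [e]
  omega
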